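/- For every natural number m, Σ_{ℓ=0}^{m} C_{2m-2ℓ} C_{2ℓ} = 4^m C_m, i.e., the sum over even-index terms of the Catalan convolution of total index 2m equals 4^m times C_m. -/

import Mathlib

open Finset

private def c (n : ℕ) : ℚ := catalan n

private lemma cat_rec_nat (n : ℕ) :
    (n + 1) * ((n + 2) * catalan (n + 1)) = (n + 1) * (2 * (2 * n + 1) * catalan n) := by
  calc (n + 1) * ((n + 2) * catalan (n + 1))
      = (n + 1) * ((n + 1 + 1) * catalan (n + 1)) := by ring
    _ = (n + 1) * Nat.centralBinom (n + 1) := by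
        rw [succ_mul_catalan_eq_centralBinom]
    _ = 2 * (2 * n + 1) * Nat.centralBinom n := Nat.succ_mul_centralBinom_succ n
    _ = 2 * (2 * n + 1) * ((n + 1) * catalan n) := by
        rw [succ_mul_catalan_eq_centralBinom]
    _ = (n + 1) * (2 * (2 * n + 1) * catalan n) := by ring

private lemma cat_rec (n : ℕ) : ((n : ℚ) + 2) * c (n + 1) = 2 * (2 * n + 1) * c n := by
  have h := cat_rec_nat n
  have h' : ((n : ℚ) + 1) * (((n : ℚ) + 2) * c (n + 1))
      = ((n : ℚ) + 1) * (2 * (2 * n + 1) * c n) := by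
    unfold c
    exact_mod_cast congrArg (Nat.cast : ℕ → ℚ) h
  have hne : ((n : ℚ) + 1) ≠ 0 := by positivity
  exact mul_left_cancel₀ hne h'

private lemma c_step (n : ℕ) :
    c (2 * n + 2) = 4 * (4 * (n : ℚ) + 1) * (4 * n + 3) * c (2 * n)
      / ((2 * (n : ℚ) + 2) * (2 * n + 3)) := by
  have h1 := cat_rec (2 * n)
  have h2 := cat_rec (2 * n + 1)
  have e : 2 * n + 1 + 1 = 2 * n + 2 := by omega
  rw [e] at h2
  push_cast at h1 h2
  have d1 : (2 * (n : ℚ) + 2) ≠ 0 := by positivity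
  have d2 : (2 * (n : ℚ) + 3) ≠ 0 := by positivity
  field_simp
  linear_combination (2 * (n:ℚ) + 2) * h2 + 2 * (4 * (n:ℚ) + 3) * h1

/-- The Zeilberger certificate term: `gq ℓ j` corresponds to `G(m, ℓ)` with `m = ℓ + j`. -/
private def gq (ℓ j : ℕ) : ℚ :=
  ((ℓ : ℚ) * ((-96 * ((ℓ : ℚ) + j) ^ 3 - 224 * ((ℓ : ℚ) + j) ^ 2 - 146 * ((ℓ : ℚ) + j) - 24)
      + (-192 * ((ℓ : ℚ) + j) ^ 3 - 192 * ((ℓ : ℚ) + j) ^ 2 + 124 * ((ℓ : ℚ) + j) + 92) * ℓ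
      + (512 * ((ℓ : ℚ) + j) ^ 2 + 608 * ((ℓ : ℚ) + j) + 88) * (ℓ : ℚ) ^ 2
      + (-448 * ((ℓ : ℚ) + j) - 320) * (ℓ : ℚ) ^ 3 + 128 * (ℓ : ℚ) ^ 4))
    / ((((ℓ : ℚ) + j) + 1) * (2 * ((ℓ : ℚ) + j) + 3) * ((j : ℚ) + 1) * (2 * (j : ℚ) + 3))
    * (c (2 * ℓ) * c (2 * j))

private lemma tele (x y : ℕ) :
    ((x : ℚ) + y + 3) * (c (2 * (y + 2)) * c (2 * x))
      - 8 * (2 * ((x : ℚ) + y + 1) + 1) * (c (2 * (y + 1)) * c (2 * x))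
      = gq (x + 1) y - gq x (y + 1) := by
  have ey2 : 2 * (y + 2) = 2 * (y + 1) + 2 := by omega
  have ey1 : 2 * (y + 1) = 2 * y + 2 := by omega
  have ex1 : 2 * (x + 1) = 2 * x + 2 := by omega
  have hy2 := c_step (y + 1)
  have hy1 := c_step y
  have hx1 := c_step x
  unfold gq
  rw [ey2, hy2, ey1, hy1, ex1, hx1]
  push_cast
  have d1 : (2 * (y : ℚ) + 2) ≠ 0 := by positivity
  have d2 : (2 * (y : ℚ) + 3) ≠ 0 := by positivity
  have d3 : (2 * (y : ℚ) + 4) ≠ 0 := by positivity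
  have d4 : (2 * (y : ℚ) + 5) ≠ 0 := by positivity
  have d5 : (2 * (x : ℚ) + 2) ≠ 0 := by positivity
  have d6 : (2 * (x : ℚ) + 3) ≠ 0 := by positivity
  have d7 : ((x : ℚ) + y + 2) ≠ 0 := by positivity
  have d8 : (2 * ((x : ℚ) + y) + 5) ≠ 0 := by positivity
  have d9 : ((y : ℚ) + 1) ≠ 0 := by positivity
  have d10 : ((y : ℚ) + 2) ≠ 0 := by positivity
  field_simp
  ring

private lemma gq_zero (m : ℕ) : gq 0 m = 0 := by
  simp [gq]

private lemma tsumc (m : ℕ) :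
    ∑ ℓ ∈ range m, (((m : ℚ) + 2) * (c (2 * (m + 1 - ℓ)) * c (2 * ℓ))
        - 8 * (2 * (m : ℚ) + 1) * (c (2 * (m - ℓ)) * c (2 * ℓ)))
      = gq m 0 := by
  have key : ∀ ℓ ∈ range m,
      ((m : ℚ) + 2) * (c (2 * (m + 1 - ℓ)) * c (2 * ℓ))
          - 8 * (2 * (m : ℚ) + 1) * (c (2 * (m - ℓ)) * c (2 * ℓ))
        = (fun i => gq i (m - i)) (ℓ + 1) - (fun i => gq i (m - i)) ℓ := by
    intro ℓ hℓ
    simp only [mem_range] at hℓ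
    obtain ⟨k, rfl⟩ : ∃ k, m = ℓ + k + 1 := ⟨m - ℓ - 1, by omega⟩
    have e1 : ℓ + k + 1 + 1 - ℓ = k + 2 := by omega
    have e2 : ℓ + k + 1 - ℓ = k + 1 := by omega
    have e3 : ℓ + k + 1 - (ℓ + 1) = k := by omega
    simp only [e1, e2, e3]
    have := tele ℓ k
    push_cast
    linear_combination this
  rw [Finset.sum_congr rfl key, Finset.sum_range_sub (fun i => gq i (m - i))]
  simp [Nat.sub_self, gq_zero]

private lemma boundary (m : ℕ) :
    gq m 0 + ((m : ℚ) + 2) * (c 2 * c (2 * m) + c 0 * c (2 * m + 2))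
      - 8 * (2 * (m : ℚ) + 1) * (c 0 * c (2 * m)) = 0 := by
  have h2 : c 2 = 2 := by
    unfold c; rw [catalan_two]; norm_num
  have h0 : c 0 = 1 := by
    unfold c; rw [catalan_zero]; norm_num
  unfold gq
  rw [c_step m]
  simp only [Nat.mul_zero, h0, h2]
  push_cast
  have d1 : (2 * (m : ℚ) + 2) ≠ 0 := by positivity
  have d2 : (2 * (m : ℚ) + 3) ≠ 0 := by positivity
  have d3 : ((m : ℚ) + 1) ≠ 0 := by positivity
  field_simp
  ring

private lemma rec_step (m : ℕ) :
    ((m : ℚ) + 2) * ∑ ℓ ∈ range (m + 2), c (2 * (m + 1 - ℓ)) * c (2 * ℓ)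
      = 8 * (2 * (m : ℚ) + 1) * ∑ ℓ ∈ range (m + 1), c (2 * (m - ℓ)) * c (2 * ℓ) := by
  rw [sum_range_succ, sum_range_succ (fun ℓ => c (2 * (m + 1 - ℓ)) * c (2 * ℓ)),
    sum_range_succ (fun ℓ => c (2 * (m - ℓ)) * c (2 * ℓ))]
  have e1 : m + 1 - m = 1 := by omega
  have e2 : m + 1 - (m + 1) = 0 := by omega
  have e3 : m - m = 0 := by omega
  simp only [e1, e2, e3, Nat.mul_zero, Nat.mul_one]
  have h1 := tsumc m
  rw [Finset.sum_sub_distrib, ← Finset.mul_sum, ← Finset.mul_sum] at h1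
  have hb := boundary m
  have e4 : 2 * (m + 1) = 2 * m + 2 := by omega
  rw [e4]
  linear_combination h1 + hb

theorem catalan_even_convolution (m : ℕ) :
    ∑ ℓ ∈ Finset.range (m + 1), catalan (2 * (m - ℓ)) * catalan (2 * ℓ)
      = 4 ^ m * catalan m := by
  induction m with
  | zero => simp
  | succ n ih =>
    have cast_sum : ∀ N : ℕ,
        ((∑ ℓ ∈ range (N + 1), catalan (2 * (N - ℓ)) * catalan (2 * ℓ) : ℕ) : ℚ)
          = ∑ ℓ ∈ range (N + 1), c (2 * (N - ℓ)) * c (2 * ℓ) := by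
      intro N; push_cast [c]; rfl
    have ihq : ∑ ℓ ∈ range (n + 1), c (2 * (n - ℓ)) * c (2 * ℓ) = 4 ^ n * c n := by
      rw [← cast_sum, ih]; push_cast [c]; ring
    have hr := rec_step n
    have hc := cat_rec n
    have hne : ((n : ℚ) + 2) ≠ 0 := by positivity
    have key : ∑ ℓ ∈ range (n + 2), c (2 * (n + 1 - ℓ)) * c (2 * ℓ)
        = 4 ^ (n + 1) * c (n + 1) := by
      apply mul_left_cancel₀ hne
      rw [hr, ihq]
      linear_combination (-(4:ℚ) ^ (n + 1)) * hc
    have hcast := cast_sum (n + 1)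
    rw [key] at hcast
    have final : ((∑ ℓ ∈ range (n + 1 + 1), catalan (2 * (n + 1 - ℓ)) * catalan (2 * ℓ) : ℕ) : ℚ)
        = ((4 ^ (n + 1) * catalan (n + 1) : ℕ) : ℚ) := by
      rw [hcast]; push_cast [c]; ring
    exact_mod_cast final
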